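/- arXiv:1108.2515 — 3 statements merged into one kernel-verified Lean document; each statement's English description precedes it below -/
import Mathlib

section
/- Let (b_u)_{u≥0} be a normalized one-dimensional Brownian motion started at 0, let t > 0, a ≥ 0, and let x < y satisfy y < −a. Then W_0( sup_{u∈[0,t]} |b_u| ≥ a and b_t ∈ [x,y] ) ≤ 2Φ((2a−x)/√t) − 2Φ((2a−y)/√t) + Φ(−x/√t) − Φ(−y/√t). -/
open MeasureTheory ProbabilityTheory Real Set Filter
open scoped ENNReal NNReal

/-- A normalized one-dimensional Brownian motion started at `x`:
`b 0 = x` a.s., a.s. continuous paths on `[0,∞)`, independent increments, and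
`b t - b s` Gaussian with mean `0` and variance `2 (t - s)`. -/
structure IsNormalizedBM {Ω : Type*} [MeasurableSpace Ω] (P : Measure Ω)
    (b : ℝ → Ω → ℝ) (x : ℝ) : Prop where
  isProb : IsProbabilityMeasure P
  start : ∀ᵐ ω ∂P, b 0 ω = x
  meas : ∀ t, Measurable (b t)
  cont : ∀ᵐ ω ∂P, ContinuousOn (fun t => b t ω) (Set.Ici 0)
  incr : ∀ s t : ℝ, 0 ≤ s → s ≤ t →
    Measure.map (fun ω => b t ω - b s ω) P = gaussianReal 0 (Real.toNNReal (2 * (t - s)))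
  indep : ∀ (n : ℕ) (t : Fin (n + 1) → ℝ), Monotone t → 0 ≤ t 0 →
    iIndepFun
      (fun i : Fin n => fun ω => b (t i.succ) ω - b (t i.castSucc) ω) P

/-- `Φ(x) = (4π)^{-1/2} ∫_{-∞}^x e^{-u²/4} du`, the cumulative distribution function of a
centered Gaussian of variance 2. -/
noncomputable def Phi (z : ℝ) : ℝ :=
  (Real.sqrt (4 * Real.pi))⁻¹ * ∫ u in Set.Iio z, Real.exp (-u ^ 2 / 4)

lemma Phi_eq (z : ℝ) : Phi z = (gaussianReal 0 2 (Set.Iio z)).toReal := by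
  rw [gaussianReal_apply_eq_integral 0 two_ne_zero (Set.Iio z),
    ENNReal.toReal_ofReal (integral_nonneg fun u => gaussianPDFReal_nonneg _ _ _)]
  have : ∀ u : ℝ, gaussianPDFReal 0 2 u
      = (Real.sqrt (4 * Real.pi))⁻¹ * Real.exp (-u ^ 2 / 4) := by
    intro u
    simp only [gaussianPDFReal, NNReal.coe_ofNat, sub_zero]
    rw [show (2 : ℝ) * Real.pi * 2 = 4 * Real.pi by ring, show (2 : ℝ) * 2 = 4 by norm_num]
  rw [Phi]
  simp_rw [this]
  rw [integral_const_mul]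

lemma gauss_singleton (z : ℝ) : gaussianReal 0 2 {z} = 0 :=
  gaussianReal_absolutelyContinuous 0 two_ne_zero (Real.volume_singleton)

lemma gauss_Iic (z : ℝ) : (gaussianReal 0 2 (Set.Iic z)).toReal = Phi z := by
  rw [Phi_eq, ← Set.Iio_union_right,
    measure_union (by simp) (measurableSet_singleton z), gauss_singleton z, add_zero]

lemma Phi_mono {z w : ℝ} (h : z ≤ w) : Phi z ≤ Phi w := by
  rw [Phi_eq, Phi_eq]
  exact ENNReal.toReal_mono (measure_ne_top _ _)
    (measure_mono (Set.Iio_subset_Iio h))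

lemma gauss_neg : (gaussianReal 0 2).map (fun u : ℝ => -1 * u) = gaussianReal 0 2 := by
  rw [show (fun u : ℝ => -1 * u) = ((-1 : ℝ) * ·) from rfl, gaussianReal_map_const_mul]
  norm_num

lemma Phi_add_Phi_neg (z : ℝ) : Phi z + Phi (-z) = 1 := by
  have h1 : gaussianReal 0 2 (Set.Iio (-z)) = gaussianReal 0 2 (Set.Ioi z) := by
    conv_lhs => rw [← gauss_neg]
    rw [Measure.map_apply (measurable_const_mul (-1)) measurableSet_Iio]
    congr 1
    ext u
    simp only [Set.mem_preimage, Set.mem_Iio, Set.mem_Ioi]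
    constructor <;> intro h <;> nlinarith
  rw [Phi_eq, Phi_eq, h1, ← ENNReal.toReal_add (measure_ne_top _ _) (measure_ne_top _ _),
    ← measure_union ((Set.Iic_disjoint_Ioi le_rfl).mono_left Set.Iio_subset_Iic_self)
      measurableSet_Ioi, Set.Iio_union_Ioi,
    measure_compl (measurableSet_singleton z) (measure_ne_top _ _), gauss_singleton,
    measure_univ]
  simp

lemma gauss_Icc {x y : ℝ} (h : x ≤ y) :
    (gaussianReal 0 2 (Set.Icc x y)).toReal = Phi y - Phi x := by
  have hdisj : Disjoint (Set.Iio x) (Set.Icc x y) := by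
    rw [Set.disjoint_left]
    intro u hu hu'
    exact absurd hu'.1 (not_le.2 hu)
  have hu : gaussianReal 0 2 (Set.Iic y)
      = gaussianReal 0 2 (Set.Iio x) + gaussianReal 0 2 (Set.Icc x y) := by
    rw [← measure_union hdisj measurableSet_Icc, Set.Iio_union_Icc_eq_Iic h]
  have := gauss_Iic y
  rw [hu, ENNReal.toReal_add (measure_ne_top _ _) (measure_ne_top _ _), ← Phi_eq] at this
  linarith

/-- Region `R₂ = {x < y < -a}` of Lemma `FiCases`:
`W_0 (sup_{u∈[0,t]} |b_u| ≥ a and b_t ∈ [x,y]) ≤ 2Φ((2a-x)/√t) - 2Φ((2a-y)/√t) + Φ(-x/√t) - Φ(-y/√t)`. -/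
theorem bm_sup_abs_interval_R2 {Ω : Type*} [MeasurableSpace Ω] (P : Measure Ω)
    (b : ℝ → Ω → ℝ) (hb : IsNormalizedBM P b 0) (t : ℝ) (ht : 0 < t)
    (a x y : ℝ) (ha : 0 ≤ a) (hxy : x < y) (hya : y < -a) :
    (P {ω | (a ≤ ⨆ u : Set.Icc (0 : ℝ) t, |b u.1 ω|) ∧ b t ω ∈ Set.Icc x y}).toReal
      ≤ 2 * Phi ((2 * a - x) / Real.sqrt t) - 2 * Phi ((2 * a - y) / Real.sqrt t)
        + Phi (-x / Real.sqrt t) - Phi (-y / Real.sqrt t) := by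
  set s : ℝ := Real.sqrt t with hs
  have hspos : 0 < s := Real.sqrt_pos.2 ht
  -- the law of b t
  have hae : (fun ω => b t ω - b 0 ω) =ᵐ[P] b t :=
    hb.start.mono fun ω h => by show b t ω - b 0 ω = b t ω; rw [h, sub_zero]
  have hmapb : Measure.map (b t) P = gaussianReal 0 (Real.toNNReal (2 * (t - 0))) :=
    (Measure.map_congr hae).symm.trans (hb.incr 0 t le_rfl ht.le)
  -- rescaling
  have hmapg : gaussianReal 0 (Real.toNNReal (2 * (t - 0)))
      = (gaussianReal 0 2).map (fun u => s * u) := by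
    rw [show (fun u : ℝ => s * u) = (s * ·) from rfl, gaussianReal_map_const_mul s, mul_zero]
    congr 1
    rw [← NNReal.coe_inj, Real.coe_toNNReal _ (by nlinarith), NNReal.coe_mul,
      NNReal.coe_mk, NNReal.coe_ofNat, Real.sq_sqrt ht.le]
    ring
  -- chain of measures
  have hsub : {ω | (a ≤ ⨆ u : Set.Icc (0 : ℝ) t, |b u.1 ω|) ∧ b t ω ∈ Set.Icc x y}
      ⊆ {ω | b t ω ∈ Set.Icc x y} := fun ω h => h.2
  have hchain : P {ω | (a ≤ ⨆ u : Set.Icc (0 : ℝ) t, |b u.1 ω|) ∧ b t ω ∈ Set.Icc x y}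
      ≤ gaussianReal 0 2 (Set.Icc (x / s) (y / s)) := by
    calc P {ω | (a ≤ ⨆ u : Set.Icc (0 : ℝ) t, |b u.1 ω|) ∧ b t ω ∈ Set.Icc x y}
        ≤ P {ω | b t ω ∈ Set.Icc x y} := measure_mono hsub
      _ = Measure.map (b t) P (Set.Icc x y) :=
          (Measure.map_apply (hb.meas t) measurableSet_Icc).symm
      _ = (gaussianReal 0 2).map (fun u => s * u) (Set.Icc x y) := by
          rw [hmapb, hmapg]
      _ = gaussianReal 0 2 ((fun u => s * u) ⁻¹' Set.Icc x y) :=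
          Measure.map_apply (measurable_const_mul s) measurableSet_Icc
      _ = gaussianReal 0 2 (Set.Icc (x / s) (y / s)) := by
          rw [Set.preimage_const_mul_Icc₀ _ _ hspos]
  have hstep : (P {ω | (a ≤ ⨆ u : Set.Icc (0 : ℝ) t, |b u.1 ω|) ∧ b t ω ∈ Set.Icc x y}).toReal
      ≤ Phi (y / s) - Phi (x / s) := by
    rw [← gauss_Icc (by gcongr)]
    exact ENNReal.toReal_mono (measure_ne_top _ _) hchain
  -- conclude by arithmetic on Phi
  have hAB : Phi ((2 * a - y) / s) ≤ Phi ((2 * a - x) / s) := Phi_mono (by gcongr)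
  have hx' := Phi_add_Phi_neg (x / s)
  have hy' := Phi_add_Phi_neg (y / s)
  rw [neg_div, neg_div]
  linarith
end

section
/- Let s < t and let Ψ : [s,t] → Mat_n(ℝ) be continuous of the form Ψ(u) = L(u) D(u), where each L(u) is lower triangular with all diagonal entries equal to 1 and each D(u) is diagonal with nonnegative diagonal entries d₁(u), …, d_n(u), with L and D depending continuously on u. Then det( ∫ₛᵗ Ψ(u) Ψ(u)ᵀ du ) ≥ ∏_{i=1}^{n} ∫ₛᵗ d_i(u)² du. -/
open MeasureTheory ProbabilityTheory Real Set Filter Matrix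
open scoped ENNReal NNReal


private lemma psd_det_nonneg {n : ℕ} {A : Matrix (Fin n) (Fin n) ℝ} (hA : A.PosSemidef) :
    0 ≤ A.det := by
  exact hA.det_nonneg

private lemma psd_diag_nonneg {n : ℕ} {A : Matrix (Fin n) (Fin n) ℝ} (hA : A.PosSemidef)
    (i : Fin n) : 0 ≤ A i i := by
  have h := hA.dotProduct_mulVec_nonneg (Pi.single i 1)
  simpa [dotProduct, Matrix.mulVec, Pi.single_apply, Finset.mul_sum,
    Finset.sum_ite_eq, Finset.sum_ite_eq'] using h

private lemma herm_apply {n : ℕ} {A : Matrix (Fin n) (Fin n) ℝ} (hA : A.IsHermitian)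
    (i j : Fin n) : A i j = A j i := by
  have h := congrFun (congrFun hA i) j
  simpa [Matrix.conjTranspose_apply] using h.symm

private lemma det_sum_lower_bound : ∀ (n : ℕ) (N : Matrix (Fin n) (Fin n) ℝ)
    (M : Fin n → Matrix (Fin n) (Fin n) ℝ), N.PosSemidef → (∀ k, (M k).PosSemidef) →
    (∀ k i j, i < k → M k i j = 0) →
    ∏ k, M k k k ≤ (N + ∑ k, M k).det := by
  intro n
  induction n with
  | zero => intro N M _ _ _; simp
  | succ n ih =>
    intro N M hN hM hMlow
    have hMsym : ∀ k (i j : Fin (n+1)), M k i j = M k j i := fun k i j =>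
      herm_apply (hM k).1 i j
    have hMcol : ∀ k (i j : Fin (n+1)), j < k → M k i j = 0 := fun k i j h => by
      rw [hMsym]; exact hMlow k j i h
    set S : Matrix (Fin (n+1)) (Fin (n+1)) ℝ := N + ∑ k, M k with hS
    set P : Matrix (Fin (n+1)) (Fin (n+1)) ℝ := N + M 0 with hP
    have hPpsd : P.PosSemidef := hN.add (hM 0)
    have hPsym : ∀ i j, P i j = P j i := fun i j => herm_apply hPpsd.1 i j
    have hSentry : ∀ i j, S i j = N i j + ∑ k, M k i j := fun i j => by
      simp [hS, Matrix.add_apply, Matrix.sum_apply]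
    have hS0 : ∀ j : Fin (n+1), S 0 j = P 0 j := by
      intro j
      rw [hSentry, Fin.sum_univ_succ]
      have hz : ∀ k : Fin n, M k.succ 0 j = 0 := fun k => hMlow _ 0 j (Fin.succ_pos k)
      simp [hz, hP, Matrix.add_apply]
    have hS0' : ∀ i : Fin (n+1), S i 0 = P i 0 := by
      intro i
      rw [hSentry, Fin.sum_univ_succ]
      have hz : ∀ k : Fin n, M k.succ i 0 = 0 := fun k => hMcol _ i 0 (Fin.succ_pos k)
      simp [hz, hP, Matrix.add_apply]
    set a : ℝ := S 0 0 with ha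
    have ha_eq : a = N 0 0 + M 0 0 0 := by
      rw [ha, hSentry, Fin.sum_univ_succ]
      have hz : ∀ k : Fin n, M k.succ 0 0 = 0 := fun k => hMlow _ 0 0 (Fin.succ_pos k)
      simp [hz]
    have hM000 : 0 ≤ M 0 0 0 := psd_diag_nonneg (hM 0) 0
    have ha0 : 0 ≤ a := ha_eq ▸ add_nonneg (psd_diag_nonneg hN 0) hM000
    have hMa : M 0 0 0 ≤ a := ha_eq ▸ le_add_of_nonneg_left (psd_diag_nonneg hN 0)
    have hSpsd : S.PosSemidef := by
      rw [hS]
      refine hN.add ?_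
      refine Finset.sum_induction _ _ (fun x y hx hy => hx.add hy) Matrix.PosSemidef.zero ?_
      exact fun k _ => hM k
    rcases eq_or_lt_of_le ha0 with hz | hpos
    · have h0 : M 0 0 0 = 0 := le_antisymm (hz ▸ hMa) hM000
      rw [Fin.prod_univ_succ, h0, zero_mul]
      exact psd_det_nonneg hSpsd

    · -- positive pivot case
      have hane : a ≠ 0 := hpos.ne'
      set e : Fin 1 ⊕ Fin n ≃ Fin (n+1) :=
        finSumFinEquiv.trans (finCongr (Nat.add_comm 1 n)) with he
      have hfin1 : ∀ i : Fin 1, i = 0 := fun i => Subsingleton.elim i 0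
      have he1 : ∀ i : Fin 1, e (Sum.inl i) = 0 := fun i => by
        rw [hfin1 i]; apply Fin.ext; simp [he]
      have he2 : ∀ i : Fin n, e (Sum.inr i) = i.succ := fun i => by
        apply Fin.ext; simp [he, Nat.add_comm]
      set B11 : Matrix (Fin 1) (Fin 1) ℝ := of fun _ _ => a with hB11
      set B12 : Matrix (Fin 1) (Fin n) ℝ := of fun _ j => S 0 j.succ with hB12
      set B21 : Matrix (Fin n) (Fin 1) ℝ := of fun i _ => S i.succ 0 with hB21
      set B22 : Matrix (Fin n) (Fin n) ℝ := of fun i j => S i.succ j.succ with hB22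
      have hSsub : S.submatrix e e = fromBlocks B11 B12 B21 B22 := by
        ext i j
        rcases i with i | i <;> rcases j with j | j <;>
          simp [Matrix.submatrix_apply, he1, he2, Matrix.fromBlocks, hB11, hB12, hB21, hB22,
            hfin1, ha]
      have hmul : B11 * (of fun _ _ => a⁻¹ : Matrix (Fin 1) (Fin 1) ℝ) = 1 := by
        ext i j
        rw [hfin1 i, hfin1 j]
        simp [Matrix.mul_apply, Fin.sum_univ_one, hB11, mul_inv_cancel₀ hane, Matrix.one_apply]
      have hmul' : (of fun _ _ => a⁻¹ : Matrix (Fin 1) (Fin 1) ℝ) * B11 = 1 := by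
        ext i j
        rw [hfin1 i, hfin1 j]
        simp [Matrix.mul_apply, Fin.sum_univ_one, hB11, inv_mul_cancel₀ hane, Matrix.one_apply]
      haveI : Invertible B11 := ⟨of fun _ _ => a⁻¹, hmul', hmul⟩
      have hinvOf : (⅟B11 : Matrix (Fin 1) (Fin 1) ℝ) = of fun _ _ => a⁻¹ := invOf_eq_right_inv hmul
      have hinv : B11⁻¹ = (of fun _ _ => a⁻¹ : Matrix (Fin 1) (Fin 1) ℝ) :=
        Matrix.inv_eq_right_inv hmul
      set T : Matrix (Fin n) (Fin n) ℝ := B22 - B21 * ⅟B11 * B12 with hTdef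
      have hdetS : S.det = a * T.det := by
        rw [← Matrix.det_submatrix_equiv_self e S, hSsub, Matrix.det_fromBlocks₁₁]
        congr 1
        simp [Matrix.det_fin_one, hB11]
      have hTentry : ∀ i j, T i j = S i.succ j.succ - S i.succ 0 * a⁻¹ * S 0 j.succ := by
        intro i j
        simp [hTdef, Matrix.sub_apply, Matrix.mul_apply, Fin.sum_univ_one, hinvOf, hB21, hB12,
          hB22]
      set C12 : Matrix (Fin 1) (Fin n) ℝ := of fun _ j => P 0 j.succ with hC12
      set C22 : Matrix (Fin n) (Fin n) ℝ := of fun i j => P i.succ j.succ with hC22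
      have hPsub : P.submatrix e e = fromBlocks B11 C12 C12ᴴ C22 := by
        ext i j
        rcases i with i | i <;> rcases j with j | j <;>
          simp [Matrix.submatrix_apply, he1, he2, Matrix.fromBlocks, hB11, hC12, hC22,
            Matrix.conjTranspose_apply, hfin1]
        · exact (hS0 0).symm.trans ha.symm
        · exact hPsym _ _
      have hB11pd : B11.PosDef := by
        refine Matrix.PosDef.of_dotProduct_mulVec_pos ?_ ?_
        · ext i j; simp [Matrix.conjTranspose_apply, hB11]
        · intro x hx
          have hx0 : x 0 ≠ 0 := by
            intro h0; apply hx; funext i; rw [hfin1 i]; exact h0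
          have hq : (star x) ⬝ᵥ (B11 *ᵥ x) = a * (x 0 * x 0) := by
            simp [dotProduct, Matrix.mulVec, Fin.sum_univ_one, hB11]; ring
          rw [hq]
          exact mul_pos hpos (mul_self_pos.mpr hx0)
      have hfbPsd : (fromBlocks B11 C12 C12ᴴ C22).PosSemidef := by
        rw [← hPsub]; exact hPpsd.submatrix _
      have hSchur : (C22 - C12ᴴ * B11⁻¹ * C12).PosSemidef :=
        (Matrix.PosDef.fromBlocks₁₁ C12 C22 hB11pd).mp hfbPsd
      set N' : Matrix (Fin n) (Fin n) ℝ := C22 - C12ᴴ * B11⁻¹ * C12 with hN'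
      have hN'entry : ∀ i j, N' i j = P i.succ j.succ - P 0 i.succ * a⁻¹ * P 0 j.succ := by
        intro i j
        simp [hN', Matrix.sub_apply, Matrix.mul_apply, Fin.sum_univ_one, hinv, hC12, hC22,
          Matrix.conjTranspose_apply]
      set M' : Fin n → Matrix (Fin n) (Fin n) ℝ :=
        fun k => (M k.succ).submatrix Fin.succ Fin.succ with hM'
      have hM'psd : ∀ k, (M' k).PosSemidef := fun k => (hM k.succ).submatrix _
      have hM'low : ∀ k i j, i < k → M' k i j = 0 := fun k i j h =>
        hMlow k.succ i.succ j.succ (Fin.succ_lt_succ_iff.mpr h)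
      have hTdec : T = N' + ∑ k, M' k := by
        ext i j
        rw [hTentry, Matrix.add_apply, Matrix.sum_apply, hN'entry]
        have h1 : S i.succ j.succ = P i.succ j.succ + ∑ k : Fin n, M k.succ i.succ j.succ := by
          rw [hSentry, Fin.sum_univ_succ, hP]
          simp [Matrix.add_apply]
          ring
        have h2 : S i.succ 0 = P 0 i.succ := (hS0' i.succ).trans (hPsym i.succ 0)
        have h3 : S 0 j.succ = P 0 j.succ := hS0 j.succ
        rw [h1, h2, h3]
        simp [hM', Matrix.submatrix_apply]
        ring
      have hind : ∏ k : Fin n, M' k k k ≤ T.det := by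
        rw [hTdec]
        exact ih N' M' hSchur hM'psd hM'low
      have hprodnn : 0 ≤ ∏ k : Fin n, M' k k k :=
        Finset.prod_nonneg fun k _ => psd_diag_nonneg (hM'psd k) k
      calc ∏ k : Fin (n+1), M k k k = M 0 0 0 * ∏ k : Fin n, M' k k k := by
            rw [Fin.prod_univ_succ]; rfl
        _ ≤ a * T.det := mul_le_mul hMa hind hprodnn ha0
        _ = S.det := hdetS.symm

/-- If `Ψ(u) = L(u) D(u)` with `L(u)` lower triangular with unit diagonal and
`D(u) = diag (d₁(u), …, d_n(u))` with nonnegative entries, all depending continuously on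
`u ∈ [s,t]`, then `det (∫ₛᵗ Ψ(u) Ψ(u)ᵀ du) ≥ ∏ᵢ ∫ₛᵗ dᵢ(u)² du`. -/
theorem covariance_det_lower_bound {n : ℕ} (s t : ℝ) (hst : s < t)
    (L : ℝ → Matrix (Fin n) (Fin n) ℝ) (d : ℝ → Fin n → ℝ)
    (hL : ContinuousOn L (Set.Icc s t)) (hd : ContinuousOn d (Set.Icc s t))
    (hLlow : ∀ u ∈ Set.Icc s t, ∀ i j : Fin n, i < j → L u i j = 0)
    (hLdiag : ∀ u ∈ Set.Icc s t, ∀ i, L u i i = 1)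
    (hdnn : ∀ u ∈ Set.Icc s t, ∀ i, 0 ≤ d u i) :
    (∏ i, ∫ u in s..t, d u i ^ 2)
      ≤ (Matrix.of fun i j => ∫ u in s..t,
          ((L u * Matrix.diagonal (d u)) * (L u * Matrix.diagonal (d u))ᵀ) i j).det := by
  have huIcc : Set.uIcc s t = Set.Icc s t := Set.uIcc_of_le hst.le
  set g : ℝ → Fin n → Fin n → ℝ := fun u i k => L u i k * d u k with hg
  have hgc : ∀ i k, ContinuousOn (fun u => g u i k) (Set.Icc s t) := by
    intro i k
    have e1 : Continuous (fun m : Matrix (Fin n) (Fin n) ℝ => m i k) :=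
      (continuous_apply k).comp (continuous_apply i)
    exact (e1.comp_continuousOn hL).mul ((continuous_apply k).comp_continuousOn hd)
  have hInt : ∀ i k j l, IntervalIntegrable (fun u => g u i k * g u j l) volume s t := by
    intro i k j l
    apply ContinuousOn.intervalIntegrable
    rw [huIcc]
    exact (hgc i k).mul (hgc j l)
  set Mk : Fin n → Matrix (Fin n) (Fin n) ℝ :=
    fun k => Matrix.of fun i j => ∫ u in s..t, g u i k * g u j k with hMk
  have hentry : ∀ (u : ℝ) (i j : Fin n),
      ((L u * Matrix.diagonal (d u)) * (L u * Matrix.diagonal (d u))ᵀ) i j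
        = ∑ k, g u i k * g u j k := by
    intro u i j
    simp [Matrix.mul_apply, Matrix.transpose_apply, Matrix.diagonal_apply, mul_ite, ite_mul,
      mul_zero, zero_mul, Finset.sum_ite_eq, Finset.sum_ite_eq', hg]
    exact Finset.sum_congr rfl fun k _ => by ring
  have hA : (Matrix.of fun i j => ∫ u in s..t,
      ((L u * Matrix.diagonal (d u)) * (L u * Matrix.diagonal (d u))ᵀ) i j)
        = (0 : Matrix (Fin n) (Fin n) ℝ) + ∑ k, Mk k := by
    ext i j
    rw [Matrix.add_apply, Matrix.zero_apply, zero_add, Matrix.sum_apply]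
    calc (Matrix.of fun i j => ∫ u in s..t,
          ((L u * Matrix.diagonal (d u)) * (L u * Matrix.diagonal (d u))ᵀ) i j) i j
        = ∫ u in s..t, ∑ k, g u i k * g u j k := by
          rw [Matrix.of_apply]
          congr 1
          funext u
          exact hentry u i j
      _ = ∑ k, ∫ u in s..t, g u i k * g u j k :=
          intervalIntegral.integral_finset_sum (fun k _ => hInt i k j k)
      _ = ∑ k, Mk k i j := rfl
  have hMkpsd : ∀ k, (Mk k).PosSemidef := by
    intro k
    refine Matrix.PosSemidef.of_dotProduct_mulVec_nonneg ?_ ?_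
    · ext i j
      simp only [Matrix.conjTranspose_apply, Matrix.of_apply, hMk, star_trivial]
      congr 1
      funext u
      ring
    · intro x
      have h1 : ∀ i : Fin n, (∑ j, Mk k i j * x j)
          = ∫ u in s..t, ∑ j, g u i k * g u j k * x j := by
        intro i
        rw [intervalIntegral.integral_finset_sum (fun j _ => (hInt i k j k).mul_const (x j))]
        exact Finset.sum_congr rfl fun j _ => (intervalIntegral.integral_mul_const _ _).symm
      have hci : ∀ i : Fin n,
          IntervalIntegrable (fun u => x i * ∑ j, g u i k * g u j k * x j) volume s t := by
        intro i
        apply ContinuousOn.intervalIntegrable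
        rw [huIcc]
        refine ContinuousOn.mul continuousOn_const ?_
        refine continuousOn_finset_sum _ fun j _ => ?_
        exact ((hgc i k).mul (hgc j k)).mul continuousOn_const
      have h2 : (star x) ⬝ᵥ ((Mk k) *ᵥ x) = ∫ u in s..t, (∑ i, x i * g u i k)^2 := by
        calc (star x) ⬝ᵥ ((Mk k) *ᵥ x) = ∑ i, x i * ∑ j, Mk k i j * x j := by
              simp [dotProduct, Matrix.mulVec]
          _ = ∑ i, ∫ u in s..t, x i * ∑ j, g u i k * g u j k * x j := by
              refine Finset.sum_congr rfl fun i _ => ?_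
              rw [h1 i, ← intervalIntegral.integral_const_mul]
          _ = ∫ u in s..t, ∑ i, x i * ∑ j, g u i k * g u j k * x j :=
              (intervalIntegral.integral_finset_sum (fun i _ => hci i)).symm
          _ = ∫ u in s..t, (∑ i, x i * g u i k)^2 := by
              congr 1
              funext u
              rw [sq, Finset.sum_mul_sum]
              simp_rw [Finset.mul_sum]
              exact Finset.sum_congr rfl fun i _ => Finset.sum_congr rfl fun j _ => by ring
      rw [h2]
      exact intervalIntegral.integral_nonneg hst.le fun u _ => sq_nonneg _
  have hMklow : ∀ (k i j : Fin n), i < k → Mk k i j = 0 := by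
    intro k i j hik
    have hz : Mk k i j = ∫ _ in s..t, (0:ℝ) := by
      apply intervalIntegral.integral_congr
      intro u hu
      rw [huIcc] at hu
      simp [hg, hLlow u hu i k hik]
    simpa using hz
  have hMkdiag : ∀ k : Fin n, Mk k k k = ∫ u in s..t, d u k ^ 2 := by
    intro k
    apply intervalIntegral.integral_congr
    intro u hu
    rw [huIcc] at hu
    simp [hg, hLdiag u hu k, sq]
  calc (∏ i, ∫ u in s..t, d u i ^ 2) = ∏ k, Mk k k k :=
        Finset.prod_congr rfl fun k _ => (hMkdiag k).symm
    _ ≤ ((0 : Matrix (Fin n) (Fin n) ℝ) + ∑ k, Mk k).det :=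
        det_sum_lower_bound n 0 Mk Matrix.PosSemidef.zero hMkpsd hMklow
    _ = _ := by rw [← hA]
end

section
/- Let k₀ be a nonnegative integer, t > 0, and let X : [0,t] → Mat_n(ℝ) and S : [0,t] → Mat_n(ℝ) be continuous, where X(u)^{k₀+1} = 0 for every u and each S(u) is diagonal with nonnegative diagonal entries s₁(u), …, s_n(u). Then there exists a constant C > 0, depending only on n and k₀, such that ‖ ∫₀ᵗ e^{X(u)} S(u) S(u)ᵀ e^{X(u)ᵀ} du ‖ ≤ C (1 + sup_{0≤u≤t} ‖X(u)‖)^{2k₀} Σ_{j=1}^{n} ∫₀ᵗ s_j(u)² du, where ‖·‖ is the ℓ²→ℓ² operator norm. -/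
open MeasureTheory ProbabilityTheory Real Set Filter Matrix
open scoped ENNReal NNReal

set_option maxHeartbeats 1000000
set_option synthInstance.maxHeartbeats 400000



/-- The `ℓ² → ℓ²` operator norm of a real square matrix. -/
noncomputable def l2OpNorm {n : ℕ} (M : Matrix (Fin n) (Fin n) ℝ) : ℝ :=
  ‖LinearMap.toContinuousLinearMap (Matrix.toEuclideanLin M)‖

section Aux
variable {n : ℕ}

lemma euclid_coord_le (x : EuclideanSpace ℝ (Fin n)) (i : Fin n) : |x i| ≤ ‖x‖ := by
  rw [EuclideanSpace.norm_eq]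
  have h1 : |x i| = Real.sqrt (‖x i‖ ^ 2) := by
    rw [Real.sqrt_sq (norm_nonneg _), Real.norm_eq_abs]
  rw [h1]
  exact Real.sqrt_le_sqrt (Finset.single_le_sum (f := fun j => ‖x j‖ ^ 2) (fun j _ => sq_nonneg _) (Finset.mem_univ i))

lemma euclid_norm_le_sum (x : EuclideanSpace ℝ (Fin n)) : ‖x‖ ≤ ∑ i, |x i| := by
  rw [EuclideanSpace.norm_eq]
  have : ∑ i, ‖x i‖ ^ 2 ≤ (∑ i, ‖x i‖) ^ 2 :=
    Finset.sum_sq_le_sq_sum_of_nonneg (fun i _ => norm_nonneg _)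
  calc Real.sqrt (∑ i, ‖x i‖ ^ 2) ≤ Real.sqrt ((∑ i, ‖x i‖) ^ 2) := Real.sqrt_le_sqrt this
    _ = ∑ i, ‖x i‖ := Real.sqrt_sq (Finset.sum_nonneg fun i _ => norm_nonneg _)
    _ = ∑ i, |x i| := by simp [Real.norm_eq_abs]

lemma l2OpNorm_nonneg (M : Matrix (Fin n) (Fin n) ℝ) : 0 ≤ l2OpNorm M := norm_nonneg _

lemma l2OpNorm_entry_le (M : Matrix (Fin n) (Fin n) ℝ) (i j : Fin n) :
    |M i j| ≤ l2OpNorm M := by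
  have he : (LinearMap.toContinuousLinearMap (Matrix.toEuclideanLin M))
      (EuclideanSpace.single j 1) i = M i j := by
    show Matrix.toEuclideanLin M (EuclideanSpace.single j 1) i = M i j
    rw [Matrix.toEuclideanLin_apply]
    show (M *ᵥ (Pi.single j 1)) i = M i j
    rw [Matrix.mulVec_single]
    simp
  set T := LinearMap.toContinuousLinearMap (Matrix.toEuclideanLin M) with hT
  calc |M i j| = |T (EuclideanSpace.single j 1) i| := by rw [he]
    _ ≤ ‖T (EuclideanSpace.single j 1)‖ := euclid_coord_le _ i
    _ ≤ ‖T‖ * ‖EuclideanSpace.single j (1:ℝ)‖ := ContinuousLinearMap.le_opNorm _ _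
    _ = l2OpNorm M := by rw [EuclideanSpace.norm_single]; simp [l2OpNorm, hT]

lemma l2OpNorm_le_sum_abs (M : Matrix (Fin n) (Fin n) ℝ) :
    l2OpNorm M ≤ ∑ i, ∑ j, |M i j| := by
  refine ContinuousLinearMap.opNorm_le_bound _
    (Finset.sum_nonneg fun i _ => Finset.sum_nonneg fun j _ => abs_nonneg _) fun x => ?_
  have hx : ∀ v : EuclideanSpace ℝ (Fin n),
      (LinearMap.toContinuousLinearMap (Matrix.toEuclideanLin M)) v = Matrix.toEuclideanLin M v :=
    fun _ => rfl
  rw [hx]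
  calc ‖Matrix.toEuclideanLin M x‖ ≤ ∑ i, |Matrix.toEuclideanLin M x i| :=
        euclid_norm_le_sum _
    _ ≤ ∑ i, ∑ j, |M i j| * ‖x‖ := by
        refine Finset.sum_le_sum fun i _ => ?_
        have : Matrix.toEuclideanLin M x i = ∑ j, M i j * x j := by
          simp [Matrix.toEuclideanLin_apply, Matrix.mulVec, dotProduct]
        rw [this]
        calc |∑ j, M i j * x j| ≤ ∑ j, |M i j * x j| := Finset.abs_sum_le_sum_abs _ _
          _ ≤ ∑ j, |M i j| * ‖x‖ := by
            refine Finset.sum_le_sum fun j _ => ?_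
            rw [abs_mul]
            exact mul_le_mul_of_nonneg_left (euclid_coord_le x j) (abs_nonneg _)
    _ = (∑ i, ∑ j, |M i j|) * ‖x‖ := by rw [Finset.sum_mul]; simp [Finset.sum_mul]

end Aux

section Aux2
variable {n : ℕ}

lemma l2OpNorm_sum_le {ι : Type*} (s : Finset ι) (f : ι → Matrix (Fin n) (Fin n) ℝ) :
    l2OpNorm (∑ m ∈ s, f m) ≤ ∑ m ∈ s, l2OpNorm (f m) := by
  unfold l2OpNorm
  rw [map_sum, map_sum]
  exact norm_sum_le _ _

lemma l2OpNorm_smul_le (c : ℝ) (M : Matrix (Fin n) (Fin n) ℝ) :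
    l2OpNorm (c • M) ≤ |c| * l2OpNorm M := by
  unfold l2OpNorm
  rw [_root_.map_smul, _root_.map_smul]
  refine ContinuousLinearMap.opNorm_le_bound _
    (mul_nonneg (abs_nonneg _) (norm_nonneg _)) fun x => ?_
  have h1 : (c • LinearMap.toContinuousLinearMap (Matrix.toEuclideanLin M)) x
      = c • (LinearMap.toContinuousLinearMap (Matrix.toEuclideanLin M)) x := rfl
  rw [h1, norm_smul, Real.norm_eq_abs, mul_assoc]
  exact mul_le_mul_of_nonneg_left (ContinuousLinearMap.le_opNorm _ _) (abs_nonneg _)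

lemma l2OpNorm_mul_le (A B : Matrix (Fin n) (Fin n) ℝ) :
    l2OpNorm (A * B) ≤ l2OpNorm A * l2OpNorm B := by
  have := Matrix.l2_opNorm_mul A B
  exact this

lemma l2OpNorm_one_le : l2OpNorm (1 : Matrix (Fin n) (Fin n) ℝ) ≤ 1 := by
  refine ContinuousLinearMap.opNorm_le_bound _ zero_le_one fun x => ?_
  have : (LinearMap.toContinuousLinearMap (Matrix.toEuclideanLin (1 : Matrix (Fin n) (Fin n) ℝ))) x
      = x := by
    show Matrix.toEuclideanLin (1 : Matrix (Fin n) (Fin n) ℝ) x = x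
    rw [Matrix.toEuclideanLin_apply]
    show (WithLp.equiv 2 (Fin n → ℝ)).symm ((1 : Matrix (Fin n) (Fin n) ℝ) *ᵥ _) = x
    rw [Matrix.one_mulVec]
    simp
  rw [this, one_mul]

lemma l2OpNorm_pow_le (M : Matrix (Fin n) (Fin n) ℝ) (m : ℕ) :
    l2OpNorm (M ^ m) ≤ l2OpNorm M ^ m := by
  induction m with
  | zero => simpa using l2OpNorm_one_le
  | succ m ih =>
      rw [pow_succ, pow_succ]
      calc l2OpNorm (M ^ m * M) ≤ l2OpNorm (M ^ m) * l2OpNorm M := l2OpNorm_mul_le _ _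
        _ ≤ l2OpNorm M ^ m * l2OpNorm M :=
          mul_le_mul_of_nonneg_right ih (l2OpNorm_nonneg _)

lemma l2OpNorm_continuous : Continuous fun M : Matrix (Fin n) (Fin n) ℝ => l2OpNorm M := by
  have h : Continuous fun M : Matrix (Fin n) (Fin n) ℝ =>
      LinearMap.toContinuousLinearMap (Matrix.toEuclideanLin M) := by
    have h0 := LinearMap.continuous_of_finiteDimensional
      ((Matrix.toEuclideanLin (𝕜 := ℝ) (m := Fin n) (n := Fin n)).trans
        LinearMap.toContinuousLinearMap).toLinearMap
    exact h0
  exact continuous_norm.comp h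

lemma exp_eq_sum_of_nilpotent {k : ℕ} {M : Matrix (Fin n) (Fin n) ℝ} (h : M ^ (k + 1) = 0) :
    NormedSpace.exp M = ∑ m ∈ Finset.range (k + 1), ((m.factorial : ℝ)⁻¹) • M ^ m := by
  rw [NormedSpace.exp_eq_tsum ℝ]
  refine tsum_eq_sum ?_
  intro b hb
  have hbk : k + 1 ≤ b := by
    rw [Finset.mem_range] at hb; omega
  have hMb : M ^ b = 0 := by
    have hb2 : M ^ b = M ^ (k + 1) * M ^ (b - (k + 1)) := by
      rw [← pow_add]; congr 1; omega
    rw [hb2, h, zero_mul]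
  rw [hMb, smul_zero]

end Aux2

/-- Operator-norm bound for the covariance matrix
`∫₀ᵗ e^{X(u)} S(u) S(u)ᵀ e^{X(u)ᵀ} du`, where each `X(u)` is nilpotent of order `k₀ + 1` and
each `S(u)` is diagonal with nonnegative entries `s₁(u), …, s_n(u)`:
`‖∫₀ᵗ e^{X(u)} S(u) S(u)ᵀ e^{X(u)ᵀ} du‖ ≤ C (1 + sup_{0≤u≤t} ‖X(u)‖)^{2k₀} ∑ⱼ ∫₀ᵗ sⱼ(u)² du`
with `C` depending only on `n` and `k₀`. -/
theorem covariance_opnorm_bound (n k₀ : ℕ) :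
    ∃ C : ℝ, 0 < C ∧ ∀ t : ℝ, 0 < t →
      ∀ (X : ℝ → Matrix (Fin n) (Fin n) ℝ) (S : ℝ → Fin n → ℝ),
        ContinuousOn X (Set.Icc 0 t) → ContinuousOn S (Set.Icc 0 t) →
        (∀ u ∈ Set.Icc (0 : ℝ) t, X u ^ (k₀ + 1) = 0) →
        (∀ u ∈ Set.Icc (0 : ℝ) t, ∀ i, 0 ≤ S u i) →
        l2OpNorm (Matrix.of fun i j => ∫ u in (0 : ℝ)..t,
            (NormedSpace.exp (X u) * Matrix.diagonal (S u) * (Matrix.diagonal (S u))ᵀ *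
              (NormedSpace.exp (X u))ᵀ) i j)
          ≤ C * (1 + ⨆ u : Set.Icc (0 : ℝ) t, l2OpNorm (X u.1)) ^ (2 * k₀) *
            ∑ j, ∫ u in (0 : ℝ)..t, S u j ^ 2 := by
  refine ⟨((n : ℝ) * (k₀ + 1)) ^ 2 + 1, by positivity, ?_⟩
  intro t ht X S hX hS hnil _hSnn
  have h0t : (0 : ℝ) ∈ Set.Icc (0 : ℝ) t := ⟨le_rfl, ht.le⟩
  have huIcc : Set.uIcc (0 : ℝ) t = Set.Icc 0 t := Set.uIcc_of_le ht.le
  set B : ℝ := ⨆ u : Set.Icc (0 : ℝ) t, l2OpNorm (X u.1) with hBdef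
  have hcont : ContinuousOn (fun u => l2OpNorm (X u)) (Set.Icc 0 t) :=
    l2OpNorm_continuous.comp_continuousOn hX
  have hbdd : BddAbove (Set.range fun u : Set.Icc (0 : ℝ) t => l2OpNorm (X u.1)) := by
    have h1 : (Set.range fun u : Set.Icc (0 : ℝ) t => l2OpNorm (X u.1))
        = (fun u => l2OpNorm (X u)) '' Set.Icc 0 t :=
      (Set.image_eq_range (fun u => l2OpNorm (X u)) (Set.Icc 0 t)).symm
    rw [h1]
    exact (isCompact_Icc.image_of_continuousOn hcont).bddAbove
  have hBle : ∀ u ∈ Set.Icc (0 : ℝ) t, l2OpNorm (X u) ≤ B := fun u hu =>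
    le_ciSup hbdd (⟨u, hu⟩ : Set.Icc (0 : ℝ) t)
  have hB0 : (0 : ℝ) ≤ B := le_trans (l2OpNorm_nonneg _) (hBle 0 h0t)
  have h1B : (1 : ℝ) ≤ 1 + B := by linarith
  set E : ℝ := ((k₀ : ℝ) + 1) * (1 + B) ^ k₀ with hEdef
  have hE0 : (0 : ℝ) ≤ E := by positivity
  set Q : ℝ → Matrix (Fin n) (Fin n) ℝ :=
    fun u => ∑ m ∈ Finset.range (k₀ + 1), ((m.factorial : ℝ)⁻¹) • X u ^ m with hQdef
  have hQE : ∀ u ∈ Set.Icc (0 : ℝ) t, l2OpNorm (Q u) ≤ E := by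
    intro u hu
    calc l2OpNorm (Q u)
        ≤ ∑ m ∈ Finset.range (k₀ + 1), l2OpNorm (((m.factorial : ℝ)⁻¹) • X u ^ m) :=
          l2OpNorm_sum_le _ _
      _ ≤ ∑ _m ∈ Finset.range (k₀ + 1), (1 + B) ^ k₀ := by
          refine Finset.sum_le_sum fun m hm => ?_
          have hf1 : (1 : ℝ) ≤ (m.factorial : ℝ) := by exact_mod_cast (Nat.factorial_pos m)
          have h2 : |((m.factorial : ℝ)⁻¹)| ≤ 1 := by
            rw [abs_of_nonneg (by positivity)]
            exact inv_le_one_of_one_le₀ hf1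
          calc l2OpNorm (((m.factorial : ℝ)⁻¹) • X u ^ m)
              ≤ |((m.factorial : ℝ)⁻¹)| * l2OpNorm (X u ^ m) := l2OpNorm_smul_le _ _
            _ ≤ 1 * l2OpNorm (X u) ^ m :=
                mul_le_mul h2 (l2OpNorm_pow_le _ _) (l2OpNorm_nonneg _) zero_le_one
            _ = l2OpNorm (X u) ^ m := one_mul _
            _ ≤ (1 + B) ^ m :=
                pow_le_pow_left₀ (l2OpNorm_nonneg _) (le_trans (hBle u hu) (by linarith)) m
            _ ≤ (1 + B) ^ k₀ := pow_le_pow_right₀ h1B (by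
                  have := Finset.mem_range.mp hm; omega)
      _ = E := by
          rw [Finset.sum_const, Finset.card_range, nsmul_eq_mul, hEdef]
          push_cast; ring
  have hQentry : ∀ u ∈ Set.Icc (0 : ℝ) t, ∀ i k : Fin n, |Q u i k| ≤ E := fun u hu i k =>
    le_trans (l2OpNorm_entry_le _ _ _) (hQE u hu)
  set F : Fin n → Fin n → ℝ → ℝ :=
    fun i j u => ∑ k, Q u i k * Q u j k * S u k ^ 2 with hFdef
  have hgF : ∀ i j : Fin n, Set.EqOn
      (fun u => (NormedSpace.exp (X u) * Matrix.diagonal (S u) * (Matrix.diagonal (S u))ᵀ *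
        (NormedSpace.exp (X u))ᵀ) i j) (F i j) (Set.uIcc 0 t) := by
    intro i j
    rw [huIcc]
    intro u hu
    have hPQ : NormedSpace.exp (X u) = Q u := exp_eq_sum_of_nilpotent (hnil u hu)
    show (NormedSpace.exp (X u) * Matrix.diagonal (S u) * (Matrix.diagonal (S u))ᵀ *
        (NormedSpace.exp (X u))ᵀ) i j = F i j u
    rw [hPQ]
    have hm : Q u * Matrix.diagonal (S u) * (Matrix.diagonal (S u))ᵀ * (Q u)ᵀ
        = Q u * Matrix.diagonal (fun k => S u k ^ 2) * (Q u)ᵀ := by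
      rw [Matrix.diagonal_transpose,
        Matrix.mul_assoc (Q u) (Matrix.diagonal (S u)) (Matrix.diagonal (S u)),
        Matrix.diagonal_mul_diagonal]
      congr 2
      funext k
      simp [sq]
    rw [hm, Matrix.mul_apply]
    simp only [Matrix.mul_diagonal, Matrix.transpose_apply, hFdef]
    exact Finset.sum_congr rfl fun k _ => by ring
  have hQcont : ContinuousOn Q (Set.Icc 0 t) := by
    apply continuousOn_finset_sum
    intro m _
    exact ContinuousOn.const_smul (g := fun a => X a ^ m) (hX.pow m) ((m.factorial : ℝ)⁻¹)
  have hQe : ∀ i k : Fin n, ContinuousOn (fun u => Q u i k) (Set.Icc 0 t) := by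
    intro i k
    have hc : Continuous fun M : Matrix (Fin n) (Fin n) ℝ => M i k :=
      (continuous_apply k).comp (continuous_apply i)
    exact hc.comp_continuousOn hQcont
  have hSe : ∀ k : Fin n, ContinuousOn (fun u => S u k) (Set.Icc 0 t) := by
    intro k
    exact (continuous_apply k).comp_continuousOn hS
  have hFcont : ∀ i j : Fin n, ContinuousOn (F i j) (Set.Icc 0 t) := by
    intro i j
    apply continuousOn_finset_sum
    intro k _
    exact ((hQe i k).mul (hQe j k)).mul ((hSe k).pow 2)
  have hFint : ∀ i j : Fin n, IntervalIntegrable (F i j) MeasureTheory.volume 0 t := fun i j =>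
    ((hFcont i j).mono huIcc.subset).intervalIntegrable
  have hSk2int : ∀ k : Fin n, IntervalIntegrable (fun u => S u k ^ 2) MeasureTheory.volume 0 t :=
    fun k => (((hSe k).pow 2).mono huIcc.subset).intervalIntegrable
  have hgint : IntervalIntegrable (fun u => E ^ 2 * ∑ k, S u k ^ 2) MeasureTheory.volume 0 t := by
    refine ((ContinuousOn.mono ?_ huIcc.subset)).intervalIntegrable
    exact continuousOn_const.mul (continuousOn_finset_sum _ fun k _ => (hSe k).pow 2)
  have hFbnd : ∀ i j : Fin n, ∀ u ∈ Set.Icc (0 : ℝ) t,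
      |F i j u| ≤ E ^ 2 * ∑ k, S u k ^ 2 := by
    intro i j u hu
    calc |F i j u| ≤ ∑ k, |Q u i k * Q u j k * S u k ^ 2| := Finset.abs_sum_le_sum_abs _ _
      _ ≤ ∑ k, E * E * S u k ^ 2 := by
          refine Finset.sum_le_sum fun k _ => ?_
          rw [abs_mul, abs_mul, abs_of_nonneg (sq_nonneg (S u k))]
          refine mul_le_mul ?_ le_rfl (sq_nonneg _) (by positivity)
          exact mul_le_mul (hQentry u hu i k) (hQentry u hu j k) (abs_nonneg _) hE0
      _ = E ^ 2 * ∑ k, S u k ^ 2 := by rw [← Finset.mul_sum]; ring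
  have hsum0 : (0 : ℝ) ≤ ∑ k, ∫ u in (0 : ℝ)..t, S u k ^ 2 :=
    Finset.sum_nonneg fun k _ =>
      intervalIntegral.integral_nonneg ht.le fun u _ => sq_nonneg _
  set A : Matrix (Fin n) (Fin n) ℝ := Matrix.of fun i j => ∫ u in (0 : ℝ)..t,
      (NormedSpace.exp (X u) * Matrix.diagonal (S u) * (Matrix.diagonal (S u))ᵀ *
        (NormedSpace.exp (X u))ᵀ) i j with hAdef
  have hintg : (∫ u in (0 : ℝ)..t, E ^ 2 * ∑ k, S u k ^ 2)
      = E ^ 2 * ∑ k, ∫ u in (0 : ℝ)..t, S u k ^ 2 := by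
    rw [intervalIntegral.integral_const_mul,
      intervalIntegral.integral_finset_sum fun k _ => hSk2int k]
  calc l2OpNorm A ≤ ∑ i, ∑ j, |A i j| := l2OpNorm_le_sum_abs _
    _ ≤ ∑ _i : Fin n, ∑ _j : Fin n, (∫ u in (0 : ℝ)..t, E ^ 2 * ∑ k, S u k ^ 2) := by
        refine Finset.sum_le_sum fun i _ => Finset.sum_le_sum fun j _ => ?_
        have hAij : A i j = ∫ u in (0 : ℝ)..t, F i j u :=
          intervalIntegral.integral_congr (hgF i j)
        rw [hAij]
        calc |∫ u in (0 : ℝ)..t, F i j u| ≤ ∫ u in (0 : ℝ)..t, |F i j u| :=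
              intervalIntegral.abs_integral_le_integral_abs ht.le
          _ ≤ ∫ u in (0 : ℝ)..t, E ^ 2 * ∑ k, S u k ^ 2 :=
              intervalIntegral.integral_mono_on ht.le (hFint i j).abs hgint
                fun u hu => hFbnd i j u hu
    _ = (n : ℝ) ^ 2 * (E ^ 2 * ∑ k, ∫ u in (0 : ℝ)..t, S u k ^ 2) := by
        rw [Finset.sum_const, Finset.sum_const, Finset.card_univ, Fintype.card_fin,
          hintg, smul_smul, nsmul_eq_mul]
        push_cast; ring
    _ ≤ (((n : ℝ) * (k₀ + 1)) ^ 2 + 1) * (1 + B) ^ (2 * k₀) *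
          ∑ k, ∫ u in (0 : ℝ)..t, S u k ^ 2 := by
        have hpow : (1 + B) ^ (2 * k₀) = ((1 + B) ^ k₀) ^ 2 := by
          rw [two_mul, pow_add, ← sq]
        have key : (n : ℝ) ^ 2 * E ^ 2
            ≤ (((n : ℝ) * (k₀ + 1)) ^ 2 + 1) * (1 + B) ^ (2 * k₀) := by
          rw [hpow, hEdef]
          have hpk : (0 : ℝ) ≤ ((1 + B) ^ k₀) ^ 2 := sq_nonneg _
          nlinarith [hpk]
        calc (n : ℝ) ^ 2 * (E ^ 2 * ∑ k, ∫ u in (0 : ℝ)..t, S u k ^ 2)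
            = ((n : ℝ) ^ 2 * E ^ 2) * ∑ k, ∫ u in (0 : ℝ)..t, S u k ^ 2 := by ring
          _ ≤ (((n : ℝ) * (k₀ + 1)) ^ 2 + 1) * (1 + B) ^ (2 * k₀) *
              ∑ k, ∫ u in (0 : ℝ)..t, S u k ^ 2 :=
            mul_le_mul_of_nonneg_right key hsum0
end
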